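/- arXiv:2007.05567 — 2 statements merged into one kernel-verified Lean document; each statement's English description precedes it below -/
import Mathlib

section
/- Let S ⊆ ℤ^m ⊕ T be a finitely generated reduced monoid and let {g_1,…,g_r} be a binomial generating set of the lattice ideal I_{S̃}. Then L_S is a principal ideal of S (i.e., L_S = e + S for some e ∈ S) if and only if there exists i ∈ {1,…,r} such that deg_S(g_j) ∈ deg_S(g_i) + S for all j ∈ {1,…,r}. -/
open MvPolynomial

/-- The `S`-degree of an exponent vector. -/
def degS {n : ℕ} {G : Type*} [AddCommMonoid G] (a : Fin n → G) (lam : Fin n → ℕ) : G :=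
  ∑ i, lam i • a i

/-- The lattice ideal of the monoid generated by `a`. -/
noncomputable def latticeIdeal (K : Type) [Field K] {n : ℕ} {G : Type*} [AddCommMonoid G]
    (a : Fin n → G) : Ideal (MvPolynomial (Fin n) K) :=
  Ideal.span {f | ∃ α β : Fin n →₀ ℕ, degS a ⇑α = degS a ⇑β ∧
    f = monomial α (1 : K) - monomial β 1}

/-- The set of elements of `S = ⟨a_1,…,a_n⟩` having at least two different factorizations
of the same length. -/
def LSet {n : ℕ} {G : Type*} [AddCommMonoid G] (a : Fin n → G) : Set G :=
  {x | ∃ lam nu : Fin n → ℕ, lam ≠ nu ∧ degS a lam = x ∧ degS a nu = x ∧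
    ∑ i, lam i = ∑ i, nu i}

lemma degS_add {n : ℕ} {G : Type*} [AddCommMonoid G] (a : Fin n → G) (l l' : Fin n → ℕ) :
    degS a (l + l') = degS a l + degS a l' := by
  simp [degS, add_smul, Finset.sum_add_distrib]

lemma degS_mem_closure {n : ℕ} {G : Type*} [AddCommMonoid G] (a : Fin n → G) (l : Fin n → ℕ) :
    degS a l ∈ AddSubmonoid.closure (Set.range a) :=
  AddSubmonoid.sum_mem _ fun i _ =>
    AddSubmonoid.nsmul_mem _ (AddSubmonoid.subset_closure (Set.mem_range_self i)) _

lemma mem_closure_iff_degS {n : ℕ} {G : Type*} [AddCommMonoid G] (a : Fin n → G) (x : G) :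
    x ∈ AddSubmonoid.closure (Set.range a) ↔ ∃ c : Fin n → ℕ, degS a c = x := by
  constructor
  · intro hx
    induction hx using AddSubmonoid.closure_induction with
    | mem y hy =>
      obtain ⟨i, rfl⟩ := hy
      exact ⟨fun j => if j = i then 1 else 0, by simp [degS, ite_smul, Finset.sum_ite_eq']⟩
    | zero => exact ⟨0, by simp [degS]⟩
    | add x y hx hy ihx ihy =>
      obtain ⟨c, rfl⟩ := ihx; obtain ⟨d, rfl⟩ := ihy
      exact ⟨c + d, degS_add a c d⟩
  · rintro ⟨c, rfl⟩; exact degS_mem_closure a c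

lemma support_of_mem_span {n r : ℕ} {K : Type} [Field K]
    (gα gβ : Fin r → (Fin n →₀ ℕ)) (f : MvPolynomial (Fin n) K)
    (hf : f ∈ Ideal.span (Set.range fun i => monomial (gα i) (1 : K) - monomial (gβ i) 1)) :
    ∀ c ∈ f.support, ∃ i μ, c = μ + gα i ∨ c = μ + gβ i := by
  classical
  induction hf using Submodule.span_induction with
  | mem g hg =>
    obtain ⟨i, rfl⟩ := hg
    intro c hc
    have := MvPolynomial.support_sub _ _ _ hc
    simp only [support_monomial, if_neg one_ne_zero, Finset.mem_union, Finset.mem_singleton] at this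
    rcases this with h | h
    · exact ⟨i, 0, Or.inl (by simp [h])⟩
    · exact ⟨i, 0, Or.inr (by simp [h])⟩
  | zero => simp
  | add x y hx hy ihx ihy =>
    intro c hc
    rcases Finset.mem_union.mp (MvPolynomial.support_add hc) with h | h
    · exact ihx c h
    · exact ihy c h
  | smul p x hx ih =>
    intro c hc
    rw [smul_eq_mul] at hc
    obtain ⟨d, _, e, he, rfl⟩ := Finset.mem_add.mp (MvPolynomial.support_mul _ _ hc)
    obtain ⟨i, μ, h | h⟩ := ih e he
    · exact ⟨i, d + μ, Or.inl (by rw [h, add_assoc])⟩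
    · exact ⟨i, d + μ, Or.inr (by rw [h, add_assoc])⟩

lemma degS_prod {n : ℕ} {G : Type*} [AddCommMonoid G] (a : Fin n → G) (l : Fin n → ℕ) :
    degS (fun j => ((a j, (1 : ℤ)) : G × ℤ)) l = (degS a l, (∑ i, l i : ℤ)) := by
  unfold degS
  ext
  · simp [Prod.fst_sum]
  · simp [Prod.snd_sum]

-- `degS a (gα i) + S ⊆ LSet a`
lemma mem_LSet_of_gen {m n r : ℕ} {T : Type} [AddCommGroup T]
    (a : Fin n → (Fin m → ℤ) × T)
    (gα gβ : Fin r → (Fin n →₀ ℕ))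
    (hne : ∀ i, gα i ≠ gβ i)
    (hhom : ∀ i, degS (fun j => ((a j, (1 : ℤ)) : ((Fin m → ℤ) × T) × ℤ)) ⇑(gα i) =
                 degS (fun j => ((a j, (1 : ℤ)) : ((Fin m → ℤ) × T) × ℤ)) ⇑(gβ i))
    (i : Fin r) (c : Fin n → ℕ) :
    degS a ⇑(gα i) + degS a c ∈ LSet a := by
  have h := hhom i
  rw [degS_prod, degS_prod, Prod.mk.injEq] at h
  obtain ⟨hdeg, hlen⟩ := h
  refine ⟨⇑(gα i) + c, ⇑(gβ i) + c, ?_, degS_add a _ c, ?_, ?_⟩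
  · intro hcon
    apply hne i
    ext j
    have := congrFun hcon j
    simpa using this
  · rw [degS_add, ← hdeg]
  · have : (∑ j, (gα i) j : ℤ) = ∑ j, (gβ i) j := by exact_mod_cast hlen
    have h2 : (∑ j, (gα i) j : ℕ) = ∑ j, (gβ i) j := by exact_mod_cast this
    simp [Finset.sum_add_distrib, h2]

-- the converse inclusion, the hard direction
lemma LSet_subset {m n r : ℕ} {T : Type} [AddCommGroup T]
    (K : Type) [Field K]
    (a : Fin n → (Fin m → ℤ) × T)
    (gα gβ : Fin r → (Fin n →₀ ℕ))
    (hhom : ∀ i, degS (fun j => ((a j, (1 : ℤ)) : ((Fin m → ℤ) × T) × ℤ)) ⇑(gα i) =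
                 degS (fun j => ((a j, (1 : ℤ)) : ((Fin m → ℤ) × T) × ℤ)) ⇑(gβ i))
    (hgen : Ideal.span (Set.range fun i => monomial (gα i) (1 : K) - monomial (gβ i) 1) =
      latticeIdeal K (fun j => ((a j, (1 : ℤ)) : ((Fin m → ℤ) × T) × ℤ)))
    (x : ((Fin m → ℤ) × T)) (hx : x ∈ LSet a) :
    ∃ i, ∃ y ∈ AddSubmonoid.closure (Set.range a), x = degS a ⇑(gα i) + y := by
  classical
  obtain ⟨lam, nu, hlamnu, hdl, hdn, hlen⟩ := hx
  set α : Fin n →₀ ℕ := Finsupp.equivFunOnFinite.symm lam with hα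
  set β : Fin n →₀ ℕ := Finsupp.equivFunOnFinite.symm nu with hβ
  have hcα : ⇑α = lam := rfl
  have hcβ : ⇑β = nu := rfl
  have hαβ : α ≠ β := fun h => hlamnu (by rw [← hcα, ← hcβ, h])
  have hf : (monomial α (1 : K) - monomial β 1) ∈
      Ideal.span (Set.range fun i => monomial (gα i) (1 : K) - monomial (gβ i) 1) := by
    rw [hgen]
    apply Ideal.subset_span
    refine ⟨α, β, ?_, rfl⟩
    rw [hcα, hcβ, degS_prod, degS_prod, hdl, hdn]
    congr 1
    exact_mod_cast hlen
  have hsupp : α ∈ (monomial α (1 : K) - monomial β 1).support := by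
    rw [MvPolynomial.mem_support_iff]
    simp only [MvPolynomial.coeff_sub, MvPolynomial.coeff_monomial, if_pos rfl,
      if_neg (Ne.symm hαβ ∘ Eq.symm)]
    simp [Ne.symm hαβ]
  obtain ⟨i, μ, h | h⟩ := support_of_mem_span gα gβ _ hf α hsupp
  · refine ⟨i, degS a ⇑μ, degS_mem_closure a _, ?_⟩
    rw [← hdl, ← hcα, h, Finsupp.coe_add, degS_add, add_comm]
  · have hi := hhom i
    rw [degS_prod, degS_prod, Prod.mk.injEq] at hi
    refine ⟨i, degS a ⇑μ, degS_mem_closure a _, ?_⟩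
    rw [← hdl, ← hcα, h, Finsupp.coe_add, degS_add, add_comm, hi.1]

/-- **Proposition.** Let `S ⊆ ℤ^m ⊕ T` be a finitely generated reduced monoid and
`{g_1,…,g_r}` a binomial generating set of `I_{S̃}`.  Then `L_S` is a principal ideal
of `S` (i.e. `L_S = e + S` for some `e ∈ S`) iff there is an `i` such that
`deg_S(g_j) ∈ deg_S(g_i) + S` for all `j`. -/
theorem LSet_principal_iff
    {m n r : ℕ} {T : Type} [AddCommGroup T] [Fintype T]
    (K : Type) [Field K]
    (a : Fin n → (Fin m → ℤ) × T)
    -- `S` is reduced: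
    (hred : ∀ x, x ∈ AddSubmonoid.closure (Set.range a) →
      -x ∈ AddSubmonoid.closure (Set.range a) → x = 0)
    -- `a` is the minimal set of generators:
    (hmin : ∀ i, a i ∉ AddSubmonoid.closure (Set.range a \ {a i}))
    (gα gβ : Fin r → (Fin n →₀ ℕ))
    -- `g_i = x^{gα i} - x^{gβ i}` is a (nonzero) binomial of `I_{S̃}`:
    (hne : ∀ i, gα i ≠ gβ i)
    (hhom : ∀ i, degS (fun j => ((a j, (1 : ℤ)) : ((Fin m → ℤ) × T) × ℤ)) ⇑(gα i) =
                 degS (fun j => ((a j, (1 : ℤ)) : ((Fin m → ℤ) × T) × ℤ)) ⇑(gβ i))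
    -- `{g_1,…,g_r}` generates `I_{S̃}`:
    (hgen : Ideal.span (Set.range fun i => monomial (gα i) (1 : K) - monomial (gβ i) 1) =
      latticeIdeal K (fun j => ((a j, (1 : ℤ)) : ((Fin m → ℤ) × T) × ℤ))) :
    ((∃ e ∈ AddSubmonoid.closure (Set.range a),
        LSet a = {x | ∃ y ∈ AddSubmonoid.closure (Set.range a), x = e + y}) ↔
      (∃ i : Fin r, ∀ j : Fin r, ∃ y ∈ AddSubmonoid.closure (Set.range a),
        degS a ⇑(gα j) = degS a ⇑(gα i) + y)) := by
  constructor
  · rintro ⟨e, he, hLS⟩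
    have he_mem : e ∈ LSet a := by
      rw [hLS]; exact ⟨0, AddSubmonoid.zero_mem _, (add_zero e).symm⟩
    obtain ⟨i, s, hs, he_eq⟩ := LSet_subset K a gα gβ hhom hgen e he_mem
    refine ⟨i, fun j => ?_⟩
    have hj : degS a ⇑(gα j) ∈ LSet a := by
      have := mem_LSet_of_gen a gα gβ hne hhom j 0
      simpa [degS] using this
    rw [hLS] at hj
    obtain ⟨y, hy, hxy⟩ := hj
    exact ⟨s + y, AddSubmonoid.add_mem _ hs hy, by rw [hxy, he_eq, add_assoc]⟩
  · rintro ⟨i, hi⟩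
    refine ⟨degS a ⇑(gα i), degS_mem_closure a _, ?_⟩
    ext x
    simp only [Set.mem_setOf_eq]
    constructor
    · intro hx
      obtain ⟨j, y, hy, hxy⟩ := LSet_subset K a gα gβ hhom hgen x hx
      obtain ⟨z, hz, hji⟩ := hi j
      exact ⟨z + y, AddSubmonoid.add_mem _ hz hy, by rw [hxy, hji, add_assoc]⟩
    · rintro ⟨y, hy, rfl⟩
      obtain ⟨c, rfl⟩ := (mem_closure_iff_degS a y).mp hy
      exact mem_LSet_of_gen a gα gβ hne hhom i c
end

section
/- Let S = ⟨b, b + t m_1, …, b + t m_n⟩ be a numerical semigroup, where b, t ∈ ℤ^+, n ≥ 2, and m_i = f_i · ∏_{j ≠ i, 1≤j≤n} c_j, with: (a) c_1,…,c_n ∈ ℕ pairwise relatively prime, (b) gcd(f_i, c_i) = 1 for all i ∈ {1,…,n}, (c) m_n > m_i for all i ∈ {1,…,n−1}, and (d) f_n = 1. Then L_S = ∪_{i=1}^{n−1} ( c_i (b + t m_i) + S ). -/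
lemma degS_add_s18 {n : ℕ} (a : Fin n → ℕ) (x y : Fin n → ℕ) :
    degS a (x + y) = degS a x + degS a y := by
  simp only [degS, Pi.add_apply, add_smul]
  exact Finset.sum_add_distrib

lemma degS_single {n : ℕ} (a : Fin n → ℕ) (j : Fin n) (k : ℕ) :
    degS a (Pi.single j k) = k * a j := by
  simp [degS, Pi.single_apply, ite_smul]

lemma sum_single {n : ℕ} (j : Fin n) (k : ℕ) : ∑ i, Pi.single j k i = k := by
  simp [Pi.single_apply]

lemma mem_closure_range_iff_degS {k : ℕ} (a : Fin k → ℕ) (x : ℕ) :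
    x ∈ AddSubmonoid.closure (Set.range a) ↔ ∃ μ : Fin k → ℕ, degS a μ = x := by
  constructor
  · intro hx
    induction hx using AddSubmonoid.closure_induction with
    | mem z hz => obtain ⟨j, rfl⟩ := hz; exact ⟨Pi.single j 1, by simpa using degS_single a j 1⟩
    | zero => exact ⟨0, by simp [degS]⟩
    | add u v hu hv ihu ihv =>
      obtain ⟨μ, rfl⟩ := ihu; obtain ⟨ρ, rfl⟩ := ihv
      exact ⟨μ + ρ, degS_add_s18 a μ ρ⟩
  · rintro ⟨μ, rfl⟩
    exact AddSubmonoid.sum_mem _ fun i _ =>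
      AddSubmonoid.nsmul_mem _ (AddSubmonoid.subset_closure (Set.mem_range_self i)) _

/-- **Proposition.** Let `S = ⟨b, b + t m_1, …, b + t m_n⟩` be a numerical semigroup with
`b, t ∈ ℤ⁺`, `n ≥ 2`, `m_i = f_i ∏_{j ≠ i} c_j`, where (a) the `c_i` are pairwise
relatively prime, (b) `gcd(f_i, c_i) = 1`, (c) `m_n > m_i` for `i < n`, (d) `f_n = 1`.
Then `L_S = ∪_{i=1}^{n-1} (c_i (b + t m_i) + S)`. -/
theorem LSet_shifted_semigroup
    {n : ℕ} (hn : 2 ≤ n)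
    (b t : ℕ) (hb : 0 < b) (ht : 0 < t)
    (cs fs m : Fin n → ℕ)
    (hm : ∀ i, m i = fs i * ∏ j ∈ Finset.univ.erase i, cs j)
    -- (a) pairwise relatively prime:
    (hcs : ∀ i j, i ≠ j → Nat.Coprime (cs i) (cs j))
    -- (b)
    (hfc : ∀ i, Nat.Coprime (fs i) (cs i))
    -- (c)
    (hmax : ∀ i : Fin n, (i : ℕ) + 1 < n → m i < m ⟨n - 1, by omega⟩)
    -- (d)
    (hfn : fs ⟨n - 1, by omega⟩ = 1)
    -- the generating family `A = (b, b + t m_1, …, b + t m_n)`: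
    (A : Fin (n + 1) → ℕ) (hA : A = Fin.cons b (fun i => b + t * m i))
    -- `S = ⟨A⟩` is a numerical semigroup:
    (hfin : {x : ℕ | x ∉ AddSubmonoid.closure (Set.range A)}.Finite) :
    LSet A = {x | ∃ i : Fin n, (i : ℕ) + 1 < n ∧
      ∃ y ∈ AddSubmonoid.closure (Set.range A), x = cs i * (b + t * m i) + y} := by
  have hA0 : A 0 = b := by rw [hA]; rfl
  have hAs : ∀ i : Fin n, A i.succ = b + t * m i := by intro i; rw [hA]; simp
  set last : Fin n := ⟨n - 1, by omega⟩ with hlast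
  -- degree formula
  have hdeg : ∀ w : Fin (n + 1) → ℕ,
      degS A w = (∑ j, w j) * b + t * ∑ i : Fin n, w i.succ * m i := by
    intro w
    simp only [degS, smul_eq_mul, Fin.sum_univ_succ, hA0, hAs]
    rw [Finset.mul_sum, add_mul, Finset.sum_mul]
    rw [add_assoc, ← Finset.sum_add_distrib]
    congr 1
    apply Finset.sum_congr rfl
    intro i _
    ring
  -- positivity of m last
  have hmlast : 0 < m last := by
    have h0 : (⟨0, by omega⟩ : Fin n).val + 1 < n := by simpa using (show 1 < n by omega)
    have := hmax ⟨0, by omega⟩ h0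
    omega
  have hne_last : ∀ i : Fin n, (i : ℕ) + 1 < n → i ≠ last := by
    intro i hi h
    rw [Fin.ext_iff] at h
    simp [hlast] at h
    omega
  -- c_i > 0 for i < last
  have hcpos : ∀ i : Fin n, (i : ℕ) + 1 < n → 0 < cs i := by
    intro i hi
    rcases Nat.eq_zero_or_pos (cs i) with h0 | h
    · exfalso
      have hmem : i ∈ Finset.univ.erase last := by
        simp [Finset.mem_erase, hne_last i hi]
      have : m last = 0 := by
        rw [hm last, Finset.prod_eq_zero hmem h0, mul_zero]
      omega
    · exact h
  -- key product facts
  have hkey : ∀ i : Fin n, (i : ℕ) + 1 < n →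
      fs i * cs last < cs i ∧ cs i * m i = (fs i * cs last) * m last := by
    intro i hi
    have hil : i ≠ last := hne_last i hi
    have hQdef : (Finset.univ.erase i).erase last = (Finset.univ.erase last).erase i :=
      Finset.erase_right_comm
    set Q : ℕ := ∏ j ∈ (Finset.univ.erase i).erase last, cs j with hQ
    have h1 : ∏ j ∈ Finset.univ.erase i, cs j = cs last * Q := by
      rw [hQ, Finset.mul_prod_erase]
      simp [Finset.mem_erase, Ne.symm hil]
    have h2 : ∏ j ∈ Finset.univ.erase last, cs j = cs i * Q := by
      rw [hQ, hQdef, Finset.mul_prod_erase]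
      simp [Finset.mem_erase, hil]
    have hmi : m i = fs i * (cs last * Q) := by rw [hm i, h1]
    have hml : m last = cs i * Q := by rw [hm last, hfn, h2, one_mul]
    have hlt : m i < m last := hmax i hi
    have hlt' : fs i * cs last * Q < cs i * Q := by
      calc fs i * cs last * Q = fs i * (cs last * Q) := by ring
      _ < cs i * Q := by rw [← hmi, ← hml]; exact hlt
    constructor
    · exact Nat.lt_of_mul_lt_mul_right hlt'
    · rw [hmi, hml]; ring
  -- divisibility and coprimality facts
  have hdvd : ∀ i j : Fin n, i ≠ j → cs i ∣ m j := by
    intro i j hij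
    rw [hm j]
    exact Dvd.dvd.mul_left
      (Finset.dvd_prod_of_mem cs (by simp [Finset.mem_erase, hij])) _
  have hcop : ∀ i : Fin n, Nat.Coprime (m i) (cs i) := by
    intro i
    rw [hm i]
    exact Nat.Coprime.mul (hfc i)
      (Nat.Coprime.prod_left fun j hj => hcs j i (Finset.ne_of_mem_erase hj))
  ext x
  constructor
  · rintro ⟨lam, nu, hne, hlamx, hnux, hlen⟩
    -- the m-weighted sums agree
    have hkeyeq : ∑ i : Fin n, lam i.succ * m i = ∑ i : Fin n, nu i.succ * m i := by
      have h1 := hdeg lam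
      have h2 := hdeg nu
      rw [hlamx] at h1; rw [hnux] at h2
      rw [hlen] at h1
      have := h1.symm.trans h2
      have h3 := Nat.add_left_cancel this
      exact Nat.eq_of_mul_eq_mul_left ht h3
    -- modular congruences
    have hcong : ∀ i : Fin n, lam i.succ ≡ nu i.succ [MOD cs i] := by
      intro i
      have hmod : ∀ w : Fin (n+1) → ℕ,
          (∑ j : Fin n, w j.succ * m j) ≡ w i.succ * m i [MOD cs i] := by
        intro w
        rw [← Finset.add_sum_erase _ _ (Finset.mem_univ i)]
        have hdvds : cs i ∣ ∑ j ∈ Finset.univ.erase i, w j.succ * m j :=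
          Finset.dvd_sum fun j hj =>
            Dvd.dvd.mul_left (hdvd i j (Ne.symm (Finset.ne_of_mem_erase hj))) _
        calc w i.succ * m i + ∑ j ∈ Finset.univ.erase i, w j.succ * m j
            ≡ w i.succ * m i + 0 [MOD cs i] :=
              Nat.ModEq.add_left _ ((Nat.modEq_zero_iff_dvd).2 hdvds)
        _ = w i.succ * m i := by ring
      have h := ((hmod lam).symm.trans (hkeyeq ▸ (hmod nu) : _)).symm
      -- h : lam i.succ * m i ≡ nu i.succ * m i [MOD cs i]  (roughly)
      have h' : lam i.succ * m i ≡ nu i.succ * m i [MOD cs i] :=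
        (hmod lam).symm.trans (hkeyeq ▸ hmod nu)
      exact Nat.ModEq.cancel_right_of_coprime (hcop i).symm h'
    -- find a big coordinate
    have hex : ∃ i : Fin n, (i : ℕ) + 1 < n ∧ (cs i ≤ lam i.succ ∨ cs i ≤ nu i.succ) := by
      by_contra hcon
      push_neg at hcon
      apply hne
      have hsmall : ∀ i : Fin n, i ≠ last → lam i.succ = nu i.succ := by
        intro i hi
        have hi' : (i : ℕ) + 1 < n := by
          have h1 := i.isLt
          have h2 : (i : ℕ) ≠ n - 1 := fun h => hi (Fin.ext (by simp [hlast, h]))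
          omega
        obtain ⟨h1, h2⟩ := hcon i hi'
        have h3 := hcong i
        rwa [Nat.ModEq, Nat.mod_eq_of_lt h1, Nat.mod_eq_of_lt h2] at h3
      have hlasteq : lam last.succ = nu last.succ := by
        have hsplit : ∀ w : Fin n → ℕ,
            ∑ j : Fin n, w j * m j
              = w last * m last + ∑ j ∈ Finset.univ.erase last, w j * m j :=
          fun w => (Finset.add_sum_erase _ _ (Finset.mem_univ last)).symm
        have h1 := hkeyeq
        rw [hsplit (fun j => lam j.succ), hsplit (fun j => nu j.succ)] at h1
        have h2 : ∑ j ∈ Finset.univ.erase last, lam j.succ * m j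
            = ∑ j ∈ Finset.univ.erase last, nu j.succ * m j :=
          Finset.sum_congr rfl fun j hj => by
            rw [hsmall j (Finset.ne_of_mem_erase hj)]
        rw [h2] at h1
        have h3 := Nat.add_right_cancel h1
        exact Nat.eq_of_mul_eq_mul_right hmlast h3
      have hsuc : ∀ i : Fin n, lam i.succ = nu i.succ := by
        intro i
        by_cases hi : i = last
        · rw [hi]; exact hlasteq
        · exact hsmall i hi
      have h0 : lam 0 = nu 0 := by
        rw [Fin.sum_univ_succ, Fin.sum_univ_succ] at hlen
        have : ∑ i : Fin n, lam i.succ = ∑ i : Fin n, nu i.succ :=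
          Finset.sum_congr rfl fun i _ => hsuc i
        omega
      funext j
      refine Fin.cases ?_ ?_ j
      · exact h0
      · exact hsuc
    obtain ⟨i, hi, hcase⟩ := hex
    refine ⟨i, hi, ?_⟩
    have main : ∀ w : Fin (n+1) → ℕ, degS A w = x → cs i ≤ w i.succ →
        ∃ y ∈ AddSubmonoid.closure (Set.range A), x = cs i * (b + t * m i) + y := by
      intro w hwx hwi
      set w' : Fin (n+1) → ℕ := fun j => if j = i.succ then w j - cs i else w j with hw'
      have hsplit : w = w' + Pi.single i.succ (cs i) := by
        funext j
        by_cases hj : j = i.succ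
        · subst hj; simp [hw', Pi.single_apply]; omega
        · simp [hw', Pi.single_apply, hj]
      refine ⟨degS A w', ?_, ?_⟩
      · exact (mem_closure_range_iff_degS A _).2 ⟨w', rfl⟩
      · rw [← hwx, hsplit, degS_add_s18, degS_single, hAs i, add_comm]
    rcases hcase with h | h
    · exact main lam hlamx h
    · exact main nu hnux h
  · rintro ⟨i, hi, y, hy, rfl⟩
    obtain ⟨μ, hμ⟩ := (mem_closure_range_iff_degS A y).1 hy
    obtain ⟨hlt, hid⟩ := hkey i hi
    have hci := hcpos i hi
    have hil : i ≠ last := hne_last i hi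
    set F : ℕ := fs i * cs last with hF
    set lam : Fin (n+1) → ℕ := μ + Pi.single i.succ (cs i) with hlamdef
    set nu : Fin (n+1) → ℕ :=
      μ + Pi.single last.succ F + Pi.single (0 : Fin (n+1)) (cs i - F) with hnudef
    have hisne : i.succ ≠ last.succ := fun h => hil (Fin.succ_injective _ h)
    refine ⟨lam, nu, ?_, ?_, ?_, ?_⟩
    · intro h
      have := congrFun h i.succ
      simp [hlamdef, hnudef, Pi.single_apply, hisne, Fin.succ_ne_zero] at this
      omega
    · rw [hlamdef, degS_add_s18, degS_single, hAs i, hμ, add_comm]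
    · rw [hnudef, degS_add_s18, degS_add_s18, degS_single, degS_single, hAs last, hA0, hμ]
      have hFle : F + (cs i - F) = cs i := by omega
      calc y + F * (b + t * m last) + (cs i - F) * b
          = (F + (cs i - F)) * b + (t * (F * m last) + y) := by ring
        _ = cs i * b + (t * (cs i * m i) + y) := by rw [hFle, ← hid]
        _ = cs i * (b + t * m i) + y := by ring
    · rw [hlamdef, hnudef]
      simp only [Pi.add_apply, Finset.sum_add_distrib, sum_single]
      omega
end
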